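/- Every locally σ-compact Hausdorff rectifiable space is paracompact. -/

import Mathlib

open Set Filter Topology

section RectAux

variable {G : Type*} [TopologicalSpace G]

/-- Product of σ-compact sets is σ-compact. -/
lemma rect_isSigmaCompact_prod {X Y : Type*} [TopologicalSpace X] [TopologicalSpace Y]
    {s : Set X} {t : Set Y} (hs : IsSigmaCompact s) (ht : IsSigmaCompact t) :
    IsSigmaCompact (s ×ˢ t) := by
  obtain ⟨K, hK, hKs⟩ := hs
  obtain ⟨L, hL, hLt⟩ := ht
  have h : s ×ˢ t = ⋃ nm : ℕ × ℕ, K nm.1 ×ˢ L nm.2 := by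
    ext ⟨a, b⟩
    simp only [mem_prod, ← hKs, ← hLt, mem_iUnion, Prod.exists]
    tauto
  rw [h]
  exact isSigmaCompact_iUnion_of_isCompact _ fun nm => (hK nm.1).prod (hL nm.2)

lemma rect_isSigmaCompact_union {s t : Set G} (hs : IsSigmaCompact s) (ht : IsSigmaCompact t) :
    IsSigmaCompact (s ∪ t) := by
  rw [Set.union_eq_iUnion]
  exact isSigmaCompact_iUnion _ (fun b => by cases b <;> simpa)

variable (e : G) (p q : G × G → G)

/-- Closure absorption: `closure S ⊆ p '' (S ×ˢ W)` for any neighborhood `W` of `e`. -/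
lemma rect_closure_subset_image (hq : Continuous q)
    (hpq : ∀ x y : G, p (x, q (x, y)) = y) (hqe : ∀ x : G, q (x, x) = e)
    (S : Set G) {W : Set G} (hW : W ∈ 𝓝 e) : closure S ⊆ p '' (S ×ˢ W) := by
  intro x hx
  have hc : ContinuousAt (fun v => q (v, x)) x :=
    (hq.comp (Continuous.prodMk continuous_id continuous_const)).continuousAt
  have hT : (fun v => q (v, x)) ⁻¹' W ∈ 𝓝 x := by
    apply hc.preimage_mem_nhds
    rw [hqe x]; exact hW
  rcases mem_closure_iff_nhds.1 hx _ hT with ⟨v, hvT, hvS⟩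
  exact ⟨(v, q (v, x)), ⟨hvS, hvT⟩, hpq v x⟩

lemma rect_closed_of_absorbing (hq : Continuous q)
    (hpq : ∀ x y : G, p (x, q (x, y)) = y) (hqe : ∀ x : G, q (x, x) = e)
    {U₀ : Set G} (hU₀ : U₀ ∈ 𝓝 e)
    {K : Set G} (habs : ∀ x ∈ K, ∀ u ∈ U₀, p (x, u) ∈ K) : IsClosed K := by
  refine isClosed_of_closure_subset fun x hx => ?_
  obtain ⟨⟨v, u⟩, ⟨hv, hu⟩, hpx⟩ := rect_closure_subset_image e p q hq hpq hqe K hU₀ hx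
  exact hpx ▸ habs v hv u hu

/-- Regularity: every neighborhood contains a closed neighborhood. -/
lemma rect_closed_nhds (hp : Continuous p) (hq : Continuous q)
    (hpq : ∀ x y : G, p (x, q (x, y)) = y) (hqe : ∀ x : G, q (x, x) = e) :
    ∀ x : G, ∀ s ∈ 𝓝 x, ∃ t ∈ 𝓝 x, IsClosed t ∧ t ⊆ s := by
  have pe : ∀ x : G, p (x, e) = x := fun x => by
    have h := hpq x x; rwa [hqe] at h
  have key : ∀ s ∈ 𝓝 e, ∃ t ∈ 𝓝 e, IsClosed t ∧ t ⊆ s := by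
    intro s hs
    have pee : p (e, e) = e := pe e
    have hps : p ⁻¹' s ∈ 𝓝 (e, e) := hp.continuousAt.preimage_mem_nhds (by rwa [pee])
    rw [nhds_prod_eq, Filter.mem_prod_iff] at hps
    obtain ⟨V, hV, W, hW, hVW⟩ := hps
    refine ⟨closure V, mem_of_superset hV subset_closure, isClosed_closure, ?_⟩
    intro x hx
    obtain ⟨⟨v, u⟩, hvu, hpx⟩ := rect_closure_subset_image e p q hq hpq hqe V hW hx
    exact hpx ▸ hVW hvu
  intro x s hs
  have hgx : Continuous fun y => p (x, y) :=
    hp.comp (Continuous.prodMk continuous_const continuous_id)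
  have hginv : Continuous fun y => q (x, y) :=
    hq.comp (Continuous.prodMk continuous_const continuous_id)
  have hs' : (fun y => p (x, y)) ⁻¹' s ∈ 𝓝 e := by
    apply hgx.continuousAt.preimage_mem_nhds
    rw [pe x]; exact hs
  obtain ⟨t', ht'n, ht'c, ht's⟩ := key _ hs'
  refine ⟨(fun y => q (x, y)) ⁻¹' t', ?_, ht'c.preimage hginv, ?_⟩
  · apply hginv.continuousAt.preimage_mem_nhds
    rw [hqe x]; exact ht'n
  · intro y hy
    have : p (x, q (x, y)) ∈ s := ht's hy
    rwa [hpq x y] at this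

/-- Expansion: every σ-compact set is in the interior of a σ-compact set. -/
lemma rect_expand (hloc : ∀ x : G, ∃ U ∈ nhds x, IsSigmaCompact (closure U)) :
    ∀ B : Set G, IsSigmaCompact B → ∃ A : Set G, IsSigmaCompact A ∧ B ⊆ interior A := by
  intro B hB
  choose U hU hUc using hloc
  obtain ⟨t, htc, htsub⟩ := hB.isLindelof.elim_nhds_subcover'
    (fun x _ => interior (U x)) (fun x _ => interior_mem_nhds.2 (hU x))
  refine ⟨⋃ x ∈ t, closure (U ↑x), ?_, ?_⟩
  · exact isSigmaCompact_biUnion htc (fun i _ => hUc ↑i)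
  · intro x hx
    obtain ⟨y, hyt, hyU⟩ := mem_iUnion₂.1 (htsub hx)
    have hsub : interior (U ↑y) ⊆ ⋃ x ∈ t, closure (U ↑x) :=
      (interior_subset.trans subset_closure).trans
        (subset_iUnion₂ (s := fun (x : ↥B) (_ : x ∈ t) => closure (U ↑x)) y hyt)
    exact interior_maximal hsub isOpen_interior hyU

/-- Around every point there is an open Lindelöf set absorbing `p (· , U₀)`. -/
lemma rect_good (hp : Continuous p) (hq : Continuous q)
    (hpq : ∀ x y : G, p (x, q (x, y)) = y) (hqe : ∀ x : G, q (x, x) = e)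
    (hloc : ∀ x : G, ∃ U ∈ nhds x, IsSigmaCompact (closure U))
    {U₀ : Set G} (hU₀ : U₀ ∈ 𝓝 e) (hU₀c : IsSigmaCompact (closure U₀)) :
    ∀ z : G, ∃ K : Set G, z ∈ K ∧ IsOpen K ∧ IsLindelof K ∧
      ∀ x ∈ K, ∀ u ∈ U₀, p (x, u) ∈ K := by
  intro z
  have hexp : ∀ S : Set G, ∃ A : Set G, IsSigmaCompact S →
      (IsSigmaCompact A ∧ (S ∪ p '' (S ×ˢ closure U₀)) ⊆ interior A) := by
    intro S
    by_cases h : IsSigmaCompact S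
    · have hB : IsSigmaCompact (S ∪ p '' (S ×ˢ closure U₀)) :=
        rect_isSigmaCompact_union h ((rect_isSigmaCompact_prod h hU₀c).image hp)
      obtain ⟨A, hA1, hA2⟩ := rect_expand hloc _ hB
      exact ⟨A, fun _ => ⟨hA1, hA2⟩⟩
    · exact ⟨∅, fun hS => absurd hS h⟩
  choose F hF using hexp
  set A : ℕ → Set G := fun n => Nat.rec ({z} : Set G) (fun _ S => F S) n with hA
  have hAsc : ∀ n, IsSigmaCompact (A n) := by
    intro n
    induction n with
    | zero => exact isCompact_singleton.isSigmaCompact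
    | succ n ih => exact (hF (A n) ih).1
  have hstep : ∀ n, (A n ∪ p '' (A n ×ˢ closure U₀)) ⊆ interior (A (n + 1)) :=
    fun n => (hF (A n) (hAsc n)).2
  refine ⟨⋃ n, interior (A (n + 1)), ?_, isOpen_iUnion fun _ => isOpen_interior, ?_, ?_⟩
  · exact mem_iUnion.2 ⟨0, hstep 0 (Or.inl rfl)⟩
  · -- Lindelöf: closed subset of a σ-compact set
    have habs : ∀ x ∈ ⋃ n, interior (A (n + 1)), ∀ u ∈ U₀,
        p (x, u) ∈ ⋃ n, interior (A (n + 1)) := by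
      intro x hx u hu
      obtain ⟨n, hn⟩ := mem_iUnion.1 hx
      refine mem_iUnion.2 ⟨n + 1, hstep (n + 1) (Or.inr ?_)⟩
      exact ⟨(x, u), ⟨interior_subset hn, subset_closure hu⟩, rfl⟩
    have hclosed : IsClosed (⋃ n, interior (A (n + 1))) :=
      rect_closed_of_absorbing e p q hq hpq hqe hU₀ habs
    have hsub : (⋃ n, interior (A (n + 1))) ⊆ ⋃ n, A (n + 1) :=
      iUnion_mono fun n => interior_subset
    exact ((isSigmaCompact_iUnion _ fun n => hAsc (n + 1)).isLindelof).of_isClosed_subset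
      hclosed hsub
  · intro x hx u hu
    obtain ⟨n, hn⟩ := mem_iUnion.1 hx
    refine mem_iUnion.2 ⟨n + 1, hstep (n + 1) (Or.inr ?_)⟩
    exact ⟨(x, u), ⟨interior_subset hn, subset_closure hu⟩, rfl⟩

/-- Refinement of a cover on an open Lindelöf piece, countable and locally finite. -/
lemma rect_piece_refinement (hp : Continuous p) (hq : Continuous q)
    (hpq : ∀ x y : G, p (x, q (x, y)) = y) (hqe : ∀ x : G, q (x, x) = e)
    {α : Type*} [Nonempty α] (s : α → Set G) (ho : ∀ a, IsOpen (s a))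
    (hu : ⋃ a, s a = Set.univ)
    (P : Set G) (hPo : IsOpen P) (hPl : IsLindelof P) :
    ∃ W : ℕ → Set G, (∀ n, IsOpen (W n)) ∧ (∀ n, W n ⊆ P) ∧ (∀ n, ∃ a, W n ⊆ s a) ∧
      P ⊆ ⋃ n, W n ∧ ∀ x ∈ P, ∃ N ∈ 𝓝 x, {n | (W n ∩ N).Nonempty}.Finite := by
  classical
  have hreg := rect_closed_nhds e p q hp hq hpq hqe
  have hVx : ∀ x, x ∈ P → ∃ V V' : Set G, x ∈ V' ∧ IsOpen V' ∧ IsOpen V ∧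
      closure V' ⊆ V ∧ (∃ a, V ⊆ s a) ∧ V ⊆ P := by
    intro x hx
    have hxa : x ∈ ⋃ a, s a := hu ▸ mem_univ x
    obtain ⟨a, ha⟩ := mem_iUnion.1 hxa
    have hO : s a ∩ P ∈ 𝓝 x := ((ho a).inter hPo).mem_nhds ⟨ha, hx⟩
    obtain ⟨t, htn, htc, hts⟩ := hreg x _ hO
    have hVn : interior t ∈ 𝓝 x := interior_mem_nhds.2 htn
    obtain ⟨t', ht'n, ht'c, ht's⟩ := hreg x _ hVn
    refine ⟨interior t, interior t', mem_interior_iff_mem_nhds.2 ht'n, isOpen_interior,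
      isOpen_interior, ?_, ⟨a, ?_⟩, ?_⟩
    · exact (closure_minimal interior_subset ht'c).trans ht's
    · exact interior_subset.trans (hts.trans inter_subset_left)
    · exact interior_subset.trans (hts.trans inter_subset_right)
  choose V V' hxV' hV'o hVo hclV' hVs hVP using hVx
  obtain ⟨t, htc, hcov⟩ := hPl.elim_nhds_subcover' (fun x hx => V' x hx)
    (fun x hx => (hV'o x hx).mem_nhds (hxV' x hx))
  rcases t.eq_empty_or_nonempty with hte | htne
  · refine ⟨fun _ => ∅, fun _ => isOpen_empty, fun _ => empty_subset _,
      fun _ => ⟨Classical.arbitrary α, empty_subset _⟩, ?_, ?_⟩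
    · intro x hx
      have := hcov hx
      simp [hte] at this
    · intro x hx
      exact ⟨Set.univ, univ_mem, by simp⟩
  · haveI := htc.to_subtype
    haveI : Nonempty ↥t := htne.to_subtype
    obtain ⟨f, hf⟩ := exists_surjective_nat ↥t
    set y : ℕ → ↥P := fun n => ((f n : ↥t) : ↥P) with hy
    set Vn : ℕ → Set G := fun n => V (y n) (y n).2 with hVn
    set V'n : ℕ → Set G := fun n => V' (y n) (y n).2 with hV'n
    set W : ℕ → Set G := fun n => Vn n \ ⋃ k ∈ Finset.range n, closure (V'n k) with hW
    have hWo : ∀ n, IsOpen (W n) := fun n =>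
      (hVo _ _).sdiff (isClosed_biUnion_finset fun k _ => isClosed_closure)
    refine ⟨W, hWo, ?_, ?_, ?_, ?_⟩
    · exact fun n => diff_subset.trans (hVP _ _)
    · intro n
      obtain ⟨a, ha⟩ := hVs (y n) (y n).2
      exact ⟨a, diff_subset.trans ha⟩
    · intro x hx
      have hx' := hcov hx
      obtain ⟨z, hzt, hzV'⟩ := mem_iUnion₂.1 hx'
      obtain ⟨m, hm⟩ := hf ⟨z, hzt⟩
      have hyz : y m = z := congrArg Subtype.val hm
      have hxm : x ∈ closure (V'n m) := subset_closure (by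
        show x ∈ V' ↑(y m) (y m).2
        rw [hyz]; exact hzV')
      have hex : ∃ n, x ∈ closure (V'n n) := ⟨m, hxm⟩
      set n := Nat.find hex with hn
      refine mem_iUnion.2 ⟨n, ?_, ?_⟩
      · exact hclV' _ _ (Nat.find_spec hex)
      · intro hmem
        obtain ⟨k, hk, hxk⟩ := mem_iUnion₂.1 hmem
        exact Nat.find_min hex (Finset.mem_range.1 hk) hxk
    · intro x hx
      have hx' := hcov hx
      obtain ⟨z, hzt, hzV'⟩ := mem_iUnion₂.1 hx'
      obtain ⟨m, hm⟩ := hf ⟨z, hzt⟩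
      have hyz : y m = z := congrArg Subtype.val hm
      refine ⟨V'n m, (hV'o _ _).mem_nhds (by
        show x ∈ V' ↑(y m) (y m).2
        rw [hyz]; exact hzV'), ?_⟩
      refine (Set.finite_le_nat m).subset ?_
      intro n hn
      by_contra hnm
      have hnm : m < n := by simpa using hnm
      obtain ⟨w, hwW, hwV'⟩ := hn
      refine hwW.2 (mem_iUnion₂.2 ⟨m, Finset.mem_range.2 hnm, subset_closure hwV'⟩)

end RectAux

/-- Every locally σ-compact Hausdorff rectifiable space is paracompact. -/
theorem paracompact_of_locally_sigmaCompact_rectifiable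
    {G : Type*} [TopologicalSpace G] [T2Space G] (e : G) (p q : G × G → G)
    (hp : Continuous p) (hq : Continuous q)
    (hpq : ∀ x y : G, p (x, q (x, y)) = y)
    (hqp : ∀ x y : G, q (x, p (x, y)) = y)
    (hqe : ∀ x : G, q (x, x) = e)
    (hloc : ∀ x : G, ∃ U ∈ nhds x, IsSigmaCompact (closure U)) :
    ParacompactSpace G := by
  classical
  rcases isEmpty_or_nonempty G with hG | hG
  · exact ⟨fun α s ho hu =>
      ⟨α, s, ho, hu, fun x => (hG.false x).elim, fun a => ⟨a, subset_rfl⟩⟩⟩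
  refine ⟨fun α s ho hu => ?_⟩
  have hα : Nonempty α := by
    obtain ⟨x⟩ := hG
    have hx : x ∈ ⋃ a, s a := hu ▸ Set.mem_univ x
    obtain ⟨a, -⟩ := Set.mem_iUnion.1 hx
    exact ⟨a⟩
  obtain ⟨U₀, hU₀, hU₀c⟩ := hloc e
  -- good clopen Lindelöf absorbing sets around every point
  choose K hKz hKo hKl hKabs using rect_good e p q hp hq hpq hqe hloc hU₀ hU₀c
  -- a well order on G
  obtain ⟨lo, wo⟩ := exists_wellOrder G
  -- the pieces
  set M : G → Set G := fun z => ⋃ w : {w : G // w < z}, K w.1 with hM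
  set P : G → Set G := fun z => K z \ M z with hP
  have hMo : ∀ z, IsOpen (M z) := fun z => isOpen_iUnion fun w => hKo w.1
  have hMc : ∀ z, IsClosed (M z) := by
    intro z
    refine rect_closed_of_absorbing e p q hq hpq hqe hU₀ ?_
    intro x hx u hu
    obtain ⟨w, hw⟩ := Set.mem_iUnion.1 hx
    exact Set.mem_iUnion.2 ⟨w, hKabs w.1 x hw u hu⟩
  have hPo : ∀ z, IsOpen (P z) := fun z => (hKo z).sdiff (hMc z)
  have hPl : ∀ z, IsLindelof (P z) := fun z => (hKl z).diff (hMo z)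
  have hPcov : ∀ x : G, ∃ z, x ∈ P z := by
    intro x
    have hne : {z : G | x ∈ K z}.Nonempty := ⟨x, hKz x⟩
    refine ⟨wellFounded_lt.min _ hne, wellFounded_lt.min_mem _ hne, ?_⟩
    intro hxM
    obtain ⟨w, hw⟩ := Set.mem_iUnion.1 hxM
    exact wellFounded_lt.not_lt_min {z : G | x ∈ K z} (x := w.1) hw w.2
  have hPdisj : ∀ z z', z ≠ z' → ∀ x, x ∈ P z → x ∈ P z' → False := by
    have key : ∀ z z', z < z' → ∀ x, x ∈ P z → x ∈ P z' → False := by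
      intro z z' hlt x hxz hxz'
      exact hxz'.2 (Set.mem_iUnion.2 ⟨⟨z, hlt⟩, hxz.1⟩)
    intro z z' hne x hxz hxz'
    rcases lt_or_gt_of_ne hne with h | h
    · exact key z z' h x hxz hxz'
    · exact key z' z h x hxz' hxz
  -- refinement on each piece
  choose W hWo hWP hWs hWcov hWfin using fun z =>
    rect_piece_refinement e p q hp hq hpq hqe s ho hu (P z) (hPo z) (hPl z)
  refine ⟨G × ℕ, fun b => W b.1 b.2, fun b => hWo b.1 b.2, ?_, ?_, fun b => hWs b.1 b.2⟩
  · apply Set.eq_univ_of_forall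
    intro x
    obtain ⟨z, hz⟩ := hPcov x
    obtain ⟨n, hn⟩ := Set.mem_iUnion.1 (hWcov z hz)
    exact Set.mem_iUnion.2 ⟨(z, n), hn⟩
  · intro x
    obtain ⟨z₀, hz₀⟩ := hPcov x
    obtain ⟨N, hN, hNfin⟩ := hWfin z₀ x hz₀
    refine ⟨N ∩ P z₀, Filter.inter_mem hN ((hPo z₀).mem_nhds hz₀), ?_⟩
    have hsub : {b : G × ℕ | (W b.1 b.2 ∩ (N ∩ P z₀)).Nonempty} ⊆
        (fun n => (z₀, n)) '' {n | (W z₀ n ∩ N).Nonempty} := by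
      rintro ⟨z, n⟩ ⟨y, hyW, hyN, hyP⟩
      have hzz : z = z₀ := by
        by_contra hne
        exact hPdisj z z₀ hne y (hWP z n hyW) hyP
      subst hzz
      exact ⟨n, ⟨y, hyW, hyN⟩, rfl⟩
    exact (hNfin.image _).subset hsub
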